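/- Let q be a prime power and d ≥ 2, and set s = (q^d − 1)/(q − 1). If x ∈ PGL_d(q) is an element such that the cyclic subgroup ⟨x⟩ acts transitively on the s points of ℙ^{d−1}(𝔽_q) (i.e., x is a Singer cycle, of order s), then the image of x in the quotient PGL_d(q)/PSL_d(q) generates this quotient, which is cyclic of order gcd(d, q−1). -/

import Mathlib

open Finset Polynomial

/-! ### Auxiliary lemmas on finite fields and norms -/

lemma aux_geom_nat {q d : ℕ} (hq : 1 ≤ q) :
    (q - 1) * (∑ i ∈ Finset.range d, q ^ i) = q ^ d - 1 := by
  have h2 : ((q : ℤ) - 1) * (∑ i ∈ Finset.range d, (q : ℤ) ^ i) = (q : ℤ) ^ d - 1 := by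
    rw [mul_comm]; exact geom_sum_mul _ _
  have h3 : 1 ≤ q ^ d := Nat.one_le_pow _ _ (by omega)
  have : (((q - 1) * (∑ i ∈ Finset.range d, q ^ i) : ℕ) : ℤ) = (((q ^ d - 1 : ℕ)) : ℤ) := by
    push_cast [Nat.cast_sub hq, Nat.cast_sub h3]
    exact h2
  exact_mod_cast this

/-- The norm of a finite field extension is `u ^ (1 + q + ... + q^(d-1))`. -/
lemma aux_norm_eq_pow_sum {F K : Type*} [Field F] [Fintype F] [Field K] [Fintype K] [Algebra F K]
    (hd2 : 2 ≤ Module.finrank F K) (u : K) :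
    algebraMap F K (Algebra.norm F u) =
      u ^ (∑ i ∈ Finset.range (Module.finrank F K), Fintype.card F ^ i) := by
  classical
  set q := Fintype.card F with hqdef
  set d := Module.finrank F K with hddef
  have hq2 : 2 ≤ q := Fintype.one_lt_card
  haveI : FiniteDimensional F K := Module.Finite.of_finite
  obtain ⟨p, hcharF⟩ := CharP.exists F
  haveI : CharP F p := hcharF
  obtain ⟨n, hp, hq⟩ := FiniteField.card F p
  haveI : Fact p.Prime := ⟨hp⟩
  haveI : CharP K p := charP_of_injective_algebraMap (algebraMap F K).injective p
  have hA : ∀ j : ℕ, ∃ σ : K ≃ₐ[F] K, ∀ x : K, σ x = x ^ q ^ j := by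
    intro j
    have hpow : ∀ x : K, (iterateFrobenius K p (n * j)) x = x ^ q ^ j := by
      intro x
      rw [iterateFrobenius_def, pow_mul, ← hq]
    have hcomm : ∀ a : F, (iterateFrobenius K p (n * j)) (algebraMap F K a) = algebraMap F K a := by
      intro a
      rw [hpow, ← map_pow, FiniteField.pow_card_pow]
    let φ : K →ₐ[F] K := ⟨iterateFrobenius K p (n * j), hcomm⟩
    have hbij : Function.Bijective φ :=
      (Finite.injective_iff_bijective).mp (iterateFrobenius K p (n * j)).injective
    exact ⟨AlgEquiv.ofBijective φ hbij, fun x => hpow x⟩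
  choose A hA using hA
  obtain ⟨ζ, hζ⟩ := IsCyclic.exists_generator (α := Kˣ)
  have hordζ : orderOf ζ = Fintype.card Kˣ := by
    rw [orderOf_eq_card_of_forall_mem_zpowers hζ, Nat.card_eq_fintype_card]
  have hcardK : Fintype.card K = q ^ d := Module.card_eq_pow_finrank
  have hcardKu : Fintype.card Kˣ = q ^ d - 1 := by rw [Fintype.card_units, hcardK]
  have hlt : ∀ i : ℕ, i < d → q ^ i < q ^ d - 1 := by
    intro i hi
    have h1 : q ^ i ≤ q ^ (d - 1) := Nat.pow_le_pow_right (by omega) (by omega)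
    have h2 : q ^ (d-1) * 2 ≤ q ^ (d-1) * q := Nat.mul_le_mul_left _ hq2
    have h3 : q ^ (d-1) * q = q ^ d := by
      rw [← pow_succ]; congr 1; omega
    have h4 : 1 ≤ q ^ (d-1) := Nat.one_le_pow _ _ (by omega)
    have h5 : q ≤ q ^ (d-1) := by
      calc q = q ^ 1 := (pow_one q).symm
      _ ≤ q ^ (d-1) := Nat.pow_le_pow_right (by omega) (by omega)
    omega
  have hAinj : Function.Injective (fun i : Fin d => A i) := by
    intro i j hij
    have hvals : (ζ : K) ^ q ^ (i : ℕ) = (ζ : K) ^ q ^ (j : ℕ) := by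
      have h' := congrArg (fun σ : K ≃ₐ[F] K => σ (ζ : K)) hij
      simpa [hA] using h'
    have hu : ζ ^ q ^ (i : ℕ) = ζ ^ q ^ (j : ℕ) := by
      ext; simpa using hvals
    have := pow_injOn_Iio_orderOf (x := ζ)
      (by rw [hordζ, hcardKu]; exact Set.mem_Iio.mpr (hlt _ i.2))
      (by rw [hordζ, hcardKu]; exact Set.mem_Iio.mpr (hlt _ j.2)) hu
    have : (i : ℕ) = (j : ℕ) := Nat.pow_right_injective hq2 this
    exact Fin.ext this
  have hAbij : Function.Bijective (fun i : Fin d => A i) := by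
    rw [Fintype.bijective_iff_injective_and_card]
    exact ⟨hAinj, by rw [Fintype.card_fin, ← Nat.card_eq_fintype_card, IsGalois.card_aut_eq_finrank]⟩
  rw [Algebra.norm_eq_prod_automorphisms]
  rw [← Fintype.prod_bijective _ hAbij _ (fun σ => σ u) (fun i => rfl)]
  simp_rw [hA]
  rw [Finset.prod_pow_eq_pow_sum, Fin.sum_univ_eq_sum_range (fun i => q ^ i) d]

/-- The unit-level norm map of an extension of finite fields is surjective. -/
lemma aux_norm_units_surjective {F K : Type*} [Field F] [Fintype F] [Field K] [Fintype K]
    [Algebra F K] (hd2 : 2 ≤ Module.finrank F K) :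
    Function.Surjective (Units.map (Algebra.norm F : K →* F)) := by
  classical
  haveI : FiniteDimensional F K := Module.Finite.of_finite
  set q := Fintype.card F with hqdef
  set d := Module.finrank F K with hddef
  set s := ∑ i ∈ Finset.range d, q ^ i with hsdef
  have hq2 : 2 ≤ q := Fintype.one_lt_card
  set NU := Units.map (Algebra.norm F : K →* F) with hNU
  have hι : Function.Injective (Units.map ((algebraMap F K : F →+* K) : F →* K)) :=
    Units.map_injective (algebraMap F K).injective
  have key : ∀ v : Kˣ, Units.map ((algebraMap F K : F →+* K) : F →* K) (NU v) = v ^ s := by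
    intro v
    ext
    push_cast [Units.val_pow_eq_pow_val]
    exact aux_norm_eq_pow_sum hd2 (v : K)
  obtain ⟨ζ, hζ⟩ := IsCyclic.exists_generator (α := Kˣ)
  have hordζ : orderOf ζ = q ^ d - 1 := by
    rw [orderOf_eq_card_of_forall_mem_zpowers hζ, Nat.card_eq_fintype_card, Fintype.card_units,
      Module.card_eq_pow_finrank (K := F) (V := K)]
  have hqs : (q - 1) * s = q ^ d - 1 := aux_geom_nat (by omega)
  have hs : 0 < s := Finset.sum_pos (fun i _ => Nat.pow_pos (n := i) (by omega))
    (Finset.nonempty_range_iff.mpr (by omega))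
  have hdvd : s ∣ q ^ d - 1 := ⟨q - 1, by rw [mul_comm]; exact hqs.symm⟩
  have hord : orderOf (NU ζ) = q - 1 := by
    have h1 : orderOf (NU ζ) = orderOf (ζ ^ s) := by
      rw [← orderOf_injective _ hι (NU ζ), key ζ]
    rw [h1, orderOf_pow, hordζ, Nat.gcd_eq_right hdvd, ← hqs, Nat.mul_div_cancel _ hs]
  have htop : Subgroup.zpowers (NU ζ) = ⊤ := by
    apply Subgroup.eq_top_of_card_eq
    rw [Nat.card_zpowers, hord, Nat.card_eq_fintype_card, Fintype.card_units]
  intro b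
  have hb : b ∈ Subgroup.zpowers (NU ζ) := htop ▸ Subgroup.mem_top b
  obtain ⟨m, hm⟩ := hb
  exact ⟨ζ ^ m, by rw [map_zpow]; exact hm⟩

/-! ### The cyclic model `AdjoinRoot p ≃ₗ V` for an endomorphism with a cyclic vector -/

noncomputable section CyclicModel

variable {F : Type*} [Field F] {V : Type*} [AddCommGroup V] [Module F V]
  (p : Polynomial F) (T : Module.End F V) (v₀ : V) (hT : Polynomial.aeval T p = 0)

/-- The map `AdjoinRoot p → V` sending `r(root)` to `r(T) v₀`. -/
def cycMap : AdjoinRoot p → V := fun y =>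
  Quotient.liftOn' y (fun r => Polynomial.aeval T r v₀) (by
    intro r₁ r₂ h
    have h' : r₁ - r₂ ∈ Ideal.span {p} := by
      rwa [Submodule.quotientRel_def] at h
    rw [Ideal.mem_span_singleton] at h'
    obtain ⟨c, hc⟩ := h'
    have heq : Polynomial.aeval T r₁ = Polynomial.aeval T r₂ := by
      have h2 := sub_eq_iff_eq_add.mp hc
      rw [h2, map_add, map_mul, hT, zero_mul, zero_add]
    simp only [heq])

theorem cycMap_mk (r : Polynomial F) :
    cycMap p T v₀ hT (AdjoinRoot.mk p r) = Polynomial.aeval T r v₀ := rfl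

theorem cycMap_add (y z : AdjoinRoot p) :
    cycMap p T v₀ hT (y + z) = cycMap p T v₀ hT y + cycMap p T v₀ hT z := by
  obtain ⟨r, rfl⟩ := AdjoinRoot.mk_surjective y
  obtain ⟨r', rfl⟩ := AdjoinRoot.mk_surjective z
  rw [← map_add, cycMap_mk, cycMap_mk, cycMap_mk, map_add, LinearMap.add_apply]

theorem cycMap_smul (c : F) (y : AdjoinRoot p) :
    cycMap p T v₀ hT (c • y) = c • cycMap p T v₀ hT y := by
  obtain ⟨r, rfl⟩ := AdjoinRoot.mk_surjective y
  have h1 : c • AdjoinRoot.mk p r = AdjoinRoot.mk p (Polynomial.C c * r) := by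
    rw [Algebra.smul_def, AdjoinRoot.algebraMap_eq]
    show AdjoinRoot.mk p (Polynomial.C c) * AdjoinRoot.mk p r = _
    rw [← map_mul]
  rw [h1, cycMap_mk, cycMap_mk, map_mul, Polynomial.aeval_C, Module.End.mul_apply,
    Module.algebraMap_end_apply]

/-- `cycMap` as a linear map. -/
def cycLin : AdjoinRoot p →ₗ[F] V where
  toFun := cycMap p T v₀ hT
  map_add' := cycMap_add p T v₀ hT
  map_smul' := cycMap_smul p T v₀ hT

theorem cycLin_mk (r : Polynomial F) :
    cycLin p T v₀ hT (AdjoinRoot.mk p r) = Polynomial.aeval T r v₀ := rfl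

theorem cycLin_one : cycLin p T v₀ hT 1 = v₀ := by
  have : (1 : AdjoinRoot p) = AdjoinRoot.mk p 1 := by rw [map_one]
  rw [this, cycLin_mk, map_one, Module.End.one_apply]

theorem cycLin_root_mul (y : AdjoinRoot p) :
    cycLin p T v₀ hT (AdjoinRoot.root p * y) = T (cycLin p T v₀ hT y) := by
  obtain ⟨r, rfl⟩ := AdjoinRoot.mk_surjective y
  have h1 : AdjoinRoot.root p * AdjoinRoot.mk p r = AdjoinRoot.mk p (Polynomial.X * r) := by
    rw [map_mul, AdjoinRoot.mk_X]
  rw [h1, cycLin_mk, cycLin_mk, map_mul, Polynomial.aeval_X, Module.End.mul_apply]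

theorem cycLin_root_pow (k : ℕ) :
    cycLin p T v₀ hT (AdjoinRoot.root p ^ k) = (T ^ k) v₀ := by
  induction k with
  | zero => simpa using cycLin_one p T v₀ hT
  | succ n ih =>
    rw [pow_succ', cycLin_root_mul, ih, ← Module.End.mul_apply, ← pow_succ']

theorem cycLin_surjective (hv₀ : v₀ ≠ 0)
    (hinv : ∀ W : Submodule F V, (∀ w ∈ W, T w ∈ W) → W ≠ ⊥ → W = ⊤) :
    Function.Surjective (cycLin p T v₀ hT) := by
  rw [← LinearMap.range_eq_top]
  apply hinv
  · rintro w ⟨y, rfl⟩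
    exact ⟨AdjoinRoot.root p * y, cycLin_root_mul p T v₀ hT y⟩
  · intro hbot
    have h1 : v₀ ∈ LinearMap.range (cycLin p T v₀ hT) := ⟨1, cycLin_one p T v₀ hT⟩
    rw [hbot, Submodule.mem_bot] at h1
    exact hv₀ h1

theorem cycLin_injective [Fact (Irreducible p)] (hv₀ : v₀ ≠ 0) :
    Function.Injective (cycLin p T v₀ hT) := by
  have hmul : ∀ (z y : AdjoinRoot p), cycLin p T v₀ hT y = 0 → cycLin p T v₀ hT (z * y) = 0 := by
    intro z y hy
    obtain ⟨r, rfl⟩ := AdjoinRoot.mk_surjective z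
    induction r using Polynomial.induction_on with
    | C a =>
      have h1 : AdjoinRoot.mk p (Polynomial.C a) * y = a • y := by
        rw [Algebra.smul_def, AdjoinRoot.algebraMap_eq]
        rfl
      rw [h1, map_smul, hy, smul_zero]
    | add r1 r2 h1 h2 =>
      rw [map_add, add_mul, map_add, h1, h2, add_zero]
    | monomial n a ih =>
      have h1 : AdjoinRoot.mk p (Polynomial.C a * Polynomial.X ^ (n + 1)) * y =
          AdjoinRoot.root p * (AdjoinRoot.mk p (Polynomial.C a * Polynomial.X ^ n) * y) := by
        rw [show Polynomial.C a * Polynomial.X ^ (n + 1) =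
          (Polynomial.C a * Polynomial.X ^ n) * Polynomial.X by ring, map_mul, AdjoinRoot.mk_X]
        ring
      rw [h1, cycLin_root_mul, ih, map_zero]
  intro y z hyz
  by_contra hne
  have hy0 : y - z ≠ 0 := sub_ne_zero_of_ne hne
  have hker : cycLin p T v₀ hT (y - z) = 0 := by rw [map_sub, hyz, sub_self]
  have h1 : cycLin p T v₀ hT ((y - z)⁻¹ * (y - z)) = 0 := hmul _ _ hker
  rw [inv_mul_cancel₀ hy0, cycLin_one] at h1
  exact hv₀ h1

end CyclicModel
/-! ### Statement definitions -/

/-- The general linear group `GL_d(F)`, realized as the group of units of the endomorphism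
ring of `F^d`. -/
abbrev GLV (F : Type*) [Field F] (d : ℕ) : Type _ := (Module.End F (Fin d → F))ˣ

lemma glInj {F : Type*} [Field F] {d : ℕ} (g : GLV F d) :
    Function.Injective (g : Module.End F (Fin d → F)) :=
  ((Module.End.isUnit_iff (g : Module.End F (Fin d → F))).mp g.isUnit).injective

/-- The map induced on the projective space `ℙ^{d-1}(F)` by an element of `GL_d(F)`. -/
noncomputable def projMap {F : Type*} [Field F] {d : ℕ} (g : GLV F d) :
    Projectivization F (Fin d → F) → Projectivization F (Fin d → F) :=
  Projectivization.map (↑g : Module.End F (Fin d → F)) (glInj g)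

/-- The subgroup of scalars in `GL_d(F)`. -/
def scalarUnits (F : Type*) [Field F] (d : ℕ) : Subgroup (GLV F d) :=
  (Units.map (algebraMap F (Module.End F (Fin d → F))).toMonoidHom).range

instance scalarUnits_normal (F : Type*) [Field F] (d : ℕ) : (scalarUnits F d).Normal := by
  constructor
  rintro x ⟨a, rfl⟩ g
  refine ⟨a, Units.ext ?_⟩
  have : ((Units.map (algebraMap F (Module.End F (Fin d → F))).toMonoidHom) a :
      Module.End F (Fin d → F)) = algebraMap F (Module.End F (Fin d → F)) (a : F) := rfl
  simp only [Units.val_mul, this]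
  rw [mul_assoc, Algebra.commutes (a : F), ← mul_assoc, ← Units.val_mul, mul_inv_cancel,
    Units.val_one, one_mul]

/-- `PSL_d(F)` viewed inside `PGL_d(F) = GL_d(F)/(scalars)`: the image of the kernel of the
determinant. -/
noncomputable def PSLsub (F : Type*) [Field F] (d : ℕ) :
    Subgroup (GLV F d ⧸ scalarUnits F d) :=
  ((Units.map (LinearMap.det : Module.End F (Fin d → F) →* F)).ker).map
    (QuotientGroup.mk' (scalarUnits F d))

theorem stmt_12 (F : Type*) [Field F] [Fintype F] (d : ℕ) (hd : 2 ≤ d)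
    (x : GLV F d ⧸ scalarUnits F d)
    (hx : ∃ g : GLV F d, QuotientGroup.mk' (scalarUnits F d) g = x ∧
      ∀ P Q : Projectivization F (Fin d → F), ∃ k : ℕ, (projMap g)^[k] P = Q) :
    (∀ y : GLV F d ⧸ scalarUnits F d, ∃ k : ℤ, (x ^ k)⁻¹ * y ∈ PSLsub F d) ∧
    Nat.card ((GLV F d ⧸ scalarUnits F d) ⧸ PSLsub F d) = Nat.gcd d (Fintype.card F - 1) := by
  classical
  obtain ⟨g, hgx, htrans⟩ := hx
  set q := Fintype.card F with hqdef
  have hq2 : 2 ≤ q := Fintype.one_lt_card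
  haveI : Nonempty (Fin d) := ⟨⟨0, by omega⟩⟩
  haveI : Nontrivial (Fin d → F) := by infer_instance
  set T : Module.End F (Fin d → F) := (g : Module.End F (Fin d → F)) with hTdef
  -- iterates of the projective map
  have hTk : ∀ k : ℕ, Function.Injective (T ^ k) := by
    intro k
    have h := glInj (g ^ k)
    rwa [Units.val_pow_eq_pow_val] at h
  have hTkne : ∀ (k : ℕ) (u : Fin d → F), u ≠ 0 → (T ^ k) u ≠ 0 := by
    intro k u hu h
    exact hu (hTk k (by rw [h, map_zero]))
  have hiter : ∀ (k : ℕ) (u : Fin d → F) (hu : u ≠ 0) (h2 : (T ^ k) u ≠ 0),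
      (projMap g)^[k] (Projectivization.mk F u hu) =
        Projectivization.mk F ((T ^ k) u) h2 := by
    intro k
    induction k with
    | zero =>
      intro u hu h2
      rw [Function.iterate_zero_apply, Projectivization.mk_eq_mk_iff]
      exact ⟨1, by simp⟩
    | succ n ih =>
      intro u hu h2
      rw [Function.iterate_succ_apply', ih u hu (hTkne n u hu)]
      show Projectivization.map (T : Module.End F (Fin d → F)) (glInj g) _ = _
      rw [Projectivization.map_mk, Projectivization.mk_eq_mk_iff]
      exact ⟨1, by simp [pow_succ', Module.End.mul_apply]⟩
  -- no nontrivial invariant subspaces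
  have hInv : ∀ W : Submodule F (Fin d → F), (∀ w ∈ W, T w ∈ W) → W ≠ ⊥ → W = ⊤ := by
    intro W hWinv hWne
    obtain ⟨w, hwW, hw0⟩ := Submodule.exists_mem_ne_zero_of_ne_bot hWne
    have hWk : ∀ k : ℕ, (T ^ k) w ∈ W := by
      intro k
      induction k with
      | zero => simpa using hwW
      | succ n ih => rw [pow_succ', Module.End.mul_apply]; exact hWinv _ ih
    rw [Submodule.eq_top_iff']
    intro v
    by_cases hv : v = 0
    · rw [hv]; exact W.zero_mem
    obtain ⟨k, hk⟩ := htrans (Projectivization.mk F w hw0) (Projectivization.mk F v hv)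
    rw [hiter k w hw0 (hTkne k w hw0), Projectivization.mk_eq_mk_iff] at hk
    obtain ⟨a, ha⟩ := hk
    have hv2 : v = ((a⁻¹ : Fˣ) : F) • ((T ^ k) w) := by
      rw [← ha, Units.smul_def, smul_smul, Units.inv_mul, one_smul]
    rw [hv2]
    exact W.smul_mem _ (hWk k)
  -- minimal polynomial of T is irreducible
  have hint : IsIntegral F T := Algebra.IsIntegral.isIntegral T
  set p := minpoly F T with hpdef
  have hp0 : p ≠ 0 := minpoly.ne_zero hint
  have hpT : Polynomial.aeval T p = 0 := minpoly.aeval F T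
  have hdeg1 : ∀ r : Polynomial F, r ≠ 0 → ¬ IsUnit r → 1 ≤ r.natDegree := by
    intro r hr0 hru
    by_contra hcon
    push_neg at hcon
    interval_cases h : r.natDegree
    obtain ⟨c, rfl⟩ := Polynomial.natDegree_eq_zero.mp h
    exact hru (Polynomial.isUnit_C.mpr (isUnit_iff_ne_zero.mpr (fun hc => hr0 (by rw [hc, map_zero]))))
  have hirr : Irreducible p := by
    constructor
    · exact minpoly.not_isUnit F T
    · intro a b hab
      by_contra hcon
      push_neg at hcon
      obtain ⟨hua, hub⟩ := hcon
      have ha0 : a ≠ 0 := by rintro rfl; rw [zero_mul] at hab; exact hp0 hab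
      have hb0 : b ≠ 0 := by rintro rfl; rw [mul_zero] at hab; exact hp0 hab
      have hda : 1 ≤ a.natDegree := hdeg1 a ha0 hua
      have hdb : 1 ≤ b.natDegree := hdeg1 b hb0 hub
      have hdp : p.natDegree = a.natDegree + b.natDegree := by
        rw [hab, Polynomial.natDegree_mul ha0 hb0]
      have haT : Polynomial.aeval T b ≠ 0 := by
        intro h
        have h1 := minpoly.dvd F T h
        have h2 := Polynomial.natDegree_le_of_dvd h1 hb0
        rw [← hpdef] at h2
        omega
      obtain ⟨u, hu⟩ := DFunLike.ne_iff.mp haT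
      rw [LinearMap.zero_apply] at hu
      have hker : LinearMap.ker (Polynomial.aeval T a) = ⊤ := by
        apply hInv
        · intro w hw
          rw [LinearMap.mem_ker] at hw ⊢
          have hc : Commute (Polynomial.aeval T a) T := by
            have h1 := (Commute.all a (Polynomial.X : Polynomial F)).map (Polynomial.aeval T)
            rwa [Polynomial.aeval_X] at h1
          calc Polynomial.aeval T a (T w) = ((Polynomial.aeval T a) * T) w := rfl
            _ = (T * (Polynomial.aeval T a)) w := by rw [hc.eq]
            _ = T ((Polynomial.aeval T a) w) := rfl
            _ = 0 := by rw [hw, map_zero]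
        · intro hbot
          have hmem : Polynomial.aeval T b u ∈ LinearMap.ker (Polynomial.aeval T a) := by
            rw [LinearMap.mem_ker, ← Module.End.mul_apply, ← map_mul, ← hab, hpT,
              LinearMap.zero_apply]
          rw [hbot, Submodule.mem_bot] at hmem
          exact hu hmem
      have hz : Polynomial.aeval T a = 0 := LinearMap.ker_eq_top.mp hker
      have h1 := minpoly.dvd F T hz
      have h2 := Polynomial.natDegree_le_of_dvd h1 ha0
      rw [← hpdef] at h2
      omega
  haveI : Fact (Irreducible p) := ⟨hirr⟩
  obtain ⟨v₀, hv₀⟩ := exists_ne (0 : Fin d → F)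
  have hinj := cycLin_injective p T v₀ hpT hv₀
  have hsurjK := cycLin_surjective p T v₀ hpT hv₀ hInv
  set e : AdjoinRoot p ≃ₗ[F] (Fin d → F) :=
    LinearEquiv.ofBijective (cycLin p T v₀ hpT) ⟨hinj, hsurjK⟩ with hedef
  have hecyc : ∀ y : AdjoinRoot p, e y = cycLin p T v₀ hpT y := fun y => rfl
  haveI : Fintype (AdjoinRoot p) := Fintype.ofEquiv _ e.symm.toEquiv
  have hrank : Module.finrank F (AdjoinRoot p) = d := by
    rw [e.finrank_eq, Module.finrank_fin_fun]
  have hd2K : 2 ≤ Module.finrank F (AdjoinRoot p) := by rw [hrank]; exact hd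
  -- determinant of T is the norm of the root
  have hdet : LinearMap.det T = Algebra.norm F (AdjoinRoot.root p) := by
    have hTlin : T = (e : AdjoinRoot p →ₗ[F] (Fin d → F)) ∘ₗ
        ((Algebra.lmul F (AdjoinRoot p)) (AdjoinRoot.root p)) ∘ₗ
        (e.symm : (Fin d → F) →ₗ[F] AdjoinRoot p) := by
      apply LinearMap.ext
      intro v
      simp only [LinearMap.comp_apply, LinearEquiv.coe_coe]
      show T v = e (AdjoinRoot.root p * (e.symm v))
      rw [hecyc, cycLin_root_mul, ← hecyc, e.apply_symm_apply]
    rw [Algebra.norm_apply, hTlin, LinearMap.det_conj]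
  -- every element of K is a·root^k
  have hstar : ∀ u : AdjoinRoot p, u ≠ 0 → ∃ (k : ℕ) (a : Fˣ),
      u = algebraMap F (AdjoinRoot p) (a : F) * (AdjoinRoot.root p) ^ k := by
    intro u hu
    have he1 : e 1 = v₀ := by rw [hecyc]; exact cycLin_one p T v₀ hpT
    have heu : e u ≠ 0 := by
      intro h
      exact hu (by rwa [LinearEquiv.map_eq_zero_iff] at h)
    obtain ⟨k, hk⟩ := htrans (Projectivization.mk F v₀ hv₀) (Projectivization.mk F (e u) heu)
    rw [hiter k v₀ hv₀ (hTkne k v₀ hv₀), Projectivization.mk_eq_mk_iff] at hk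
    obtain ⟨a, ha⟩ := hk
    have h2 : (T ^ k) v₀ = e ((AdjoinRoot.root p) ^ k) := by
      rw [hecyc]; exact (cycLin_root_pow p T v₀ hpT k).symm
    have h3 : e (((a : F)) • u) = e ((AdjoinRoot.root p) ^ k) := by
      rw [map_smul, ← h2, ← ha, Units.smul_def]
    have h4 : ((a : F)) • u = (AdjoinRoot.root p) ^ k := e.injective h3
    refine ⟨k, a⁻¹, ?_⟩
    rw [← h4, ← Algebra.smul_def, smul_smul, Units.inv_mul, one_smul]
  -- group theory endgame
  set D : GLV F d →* Fˣ :=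
    Units.map (LinearMap.det : Module.End F (Fin d → F) →* F) with hD
  set Pd : Subgroup Fˣ := (powMonoidHom d : Fˣ →* Fˣ).range with hPdd
  set δ : Fˣ := D g with hδ
  have hδval : (δ : F) = Algebra.norm F (AdjoinRoot.root p) := by
    rw [hδ]
    show LinearMap.det (g : Module.End F (Fin d → F)) = _
    rw [← hTdef, hdet]
  have hgen : ∀ b : Fˣ, ∃ (k : ℕ) (a : Fˣ), b = powMonoidHom d a * δ ^ k := by
    intro b
    obtain ⟨u, hu⟩ := aux_norm_units_surjective (F := F) (K := AdjoinRoot p) hd2K b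
    obtain ⟨k, a, ha⟩ := hstar (u : AdjoinRoot p) u.ne_zero
    refine ⟨k, a, ?_⟩
    apply Units.ext
    have hbval : (b : F) = Algebra.norm F (u : AdjoinRoot p) := by rw [← hu]; rfl
    rw [hbval, ha, map_mul, map_pow, Algebra.norm_algebraMap, hrank]
    rw [Units.val_mul, Units.val_pow_eq_pow_val, powMonoidHom_apply,
      Units.val_pow_eq_pow_val, hδval]
  have hDsc : ∀ a : Fˣ,
      D (Units.map (algebraMap F (Module.End F (Fin d → F))).toMonoidHom a)
        = powMonoidHom d a := by
    intro a
    apply Units.ext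
    show LinearMap.det ((algebraMap F (Module.End F (Fin d → F))) (a : F)) = _
    rw [Module.algebraMap_end_eq_smul_id, LinearMap.det_smul, Module.finrank_fin_fun,
      LinearMap.det_id, mul_one, powMonoidHom_apply, Units.val_pow_eq_pow_val]
  have hPSL : ∀ w : GLV F d,
      QuotientGroup.mk' (scalarUnits F d) w ∈ PSLsub F d ↔ D w ∈ Pd := by
    intro w
    constructor
    · intro hw
      obtain ⟨u, hu1, hu2⟩ := hw
      rw [QuotientGroup.mk'_eq_mk'] at hu2
      obtain ⟨z, hz, rfl⟩ := hu2
      obtain ⟨a, rfl⟩ := hz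
      rw [map_mul, hDsc]
      have h1 : D u = 1 := hu1
      rw [h1, one_mul]
      exact ⟨a, rfl⟩
    · intro hw
      obtain ⟨a, ha⟩ := hw
      refine ⟨w * (Units.map (algebraMap F (Module.End F (Fin d → F))).toMonoidHom a)⁻¹,
        ?_, ?_⟩
      · show _ ∈ MonoidHom.ker _
        rw [MonoidHom.mem_ker, map_mul, map_inv, hDsc, ← ha, mul_inv_cancel]
      · rw [QuotientGroup.mk'_eq_mk']
        exact ⟨Units.map (algebraMap F (Module.End F (Fin d → F))).toMonoidHom a, ⟨a, rfl⟩,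
          by rw [inv_mul_cancel_right]⟩
  constructor
  · -- generation
    intro y
    obtain ⟨h, rfl⟩ := QuotientGroup.mk'_surjective (scalarUnits F d) y
    obtain ⟨k, a, hb⟩ := hgen (D h)
    refine ⟨(k : ℤ), ?_⟩
    rw [← hgx]
    have hq1 : ((QuotientGroup.mk' (scalarUnits F d)) g ^ (k : ℤ))⁻¹ *
        (QuotientGroup.mk' (scalarUnits F d)) h
        = QuotientGroup.mk' (scalarUnits F d) ((g ^ (k : ℤ))⁻¹ * h) := by
      rw [map_mul, map_inv, map_zpow]
    rw [hq1, hPSL, map_mul, map_inv, map_zpow, hb]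
    refine ⟨a, ?_⟩
    show powMonoidHom d a = (D g ^ (k : ℤ))⁻¹ * (powMonoidHom d a * δ ^ k)
    rw [← hδ, zpow_natCast, mul_comm ((powMonoidHom d) a), ← mul_assoc,
      inv_mul_cancel, one_mul]
  · -- cardinality
    have hker : ∀ z ∈ scalarUnits F d, ((QuotientGroup.mk' Pd).comp D) z = 1 := by
      rintro z ⟨a, rfl⟩
      show QuotientGroup.mk' Pd (D _) = 1
      rw [hDsc, QuotientGroup.mk'_apply, QuotientGroup.eq_one_iff]
      exact ⟨a, rfl⟩
    set φ := QuotientGroup.lift (scalarUnits F d) ((QuotientGroup.mk' Pd).comp D) hker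
      with hφdef
    have hφmk : ∀ w : GLV F d, φ (QuotientGroup.mk' (scalarUnits F d) w)
        = QuotientGroup.mk' Pd (D w) := fun w => rfl
    have hφker : φ.ker = PSLsub F d := by
      ext y
      obtain ⟨w, rfl⟩ := QuotientGroup.mk'_surjective (scalarUnits F d) y
      rw [MonoidHom.mem_ker, hφmk, hPSL, QuotientGroup.mk'_apply, QuotientGroup.eq_one_iff]
    have hφsurj : Function.Surjective φ := by
      intro c
      obtain ⟨b, rfl⟩ := QuotientGroup.mk'_surjective Pd c
      obtain ⟨k, a, hb⟩ := hgen b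
      refine ⟨QuotientGroup.mk' _ (g ^ k), ?_⟩
      rw [hφmk, map_pow, QuotientGroup.mk'_apply, QuotientGroup.mk'_apply, hb]
      rw [QuotientGroup.eq]
      have : (D g ^ k)⁻¹ * (powMonoidHom d a * δ ^ k) = powMonoidHom d a := by
        rw [← hδ, mul_comm ((powMonoidHom d) a), ← mul_assoc, inv_mul_cancel, one_mul]
      rw [this]
      exact ⟨a, rfl⟩
    have hcongr : Nat.card ((GLV F d ⧸ scalarUnits F d) ⧸ PSLsub F d)
        = Nat.card (Fˣ ⧸ Pd) := by
      rw [← hφker]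
      exact Nat.card_congr (QuotientGroup.quotientKerEquivOfSurjective φ hφsurj).toEquiv
    rw [hcongr]
    obtain ⟨ξ, hξ⟩ := IsCyclic.exists_generator (α := Fˣ)
    have hc : Nat.card Fˣ = q - 1 := by
      rw [Nat.card_eq_fintype_card, Fintype.card_units]
    have hordξ : orderOf ξ = q - 1 := by
      rw [orderOf_eq_card_of_forall_mem_zpowers hξ, hc]
    have hPdz : Pd = Subgroup.zpowers (ξ ^ d) := by
      ext b
      constructor
      · rintro ⟨a, rfl⟩
        obtain ⟨m, rfl⟩ := hξ a
        refine ⟨m, ?_⟩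
        show (ξ ^ d) ^ m = powMonoidHom d (ξ ^ m)
        rw [powMonoidHom_apply, ← zpow_natCast ((ξ : Fˣ) ^ m), ← zpow_mul, mul_comm,
          ← zpow_natCast (ξ : Fˣ), ← zpow_mul]
      · rintro ⟨m, rfl⟩
        refine ⟨ξ ^ m, ?_⟩
        show powMonoidHom d (ξ ^ m) = (ξ ^ d) ^ m
        rw [powMonoidHom_apply, ← zpow_natCast ((ξ : Fˣ) ^ m), ← zpow_mul, mul_comm,
          ← zpow_natCast (ξ : Fˣ), ← zpow_mul]
    have hcard1 : Nat.card Pd = (q - 1) / Nat.gcd (q - 1) d := by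
      rw [hPdz, Nat.card_zpowers, orderOf_pow, hordξ]
    have hlag := Subgroup.card_eq_card_quotient_mul_card_subgroup Pd
    have hgcd_dvd : Nat.gcd (q - 1) d ∣ q - 1 := Nat.gcd_dvd_left _ _
    have hcpos : 0 < q - 1 := by omega
    have hgpos : 0 < Nat.gcd (q - 1) d := Nat.gcd_pos_of_pos_left _ hcpos
    have hquotpos : 0 < (q - 1) / Nat.gcd (q - 1) d :=
      Nat.div_pos (Nat.le_of_dvd hcpos hgcd_dvd) hgpos
    rw [hc, hcard1] at hlag
    have hfinal : Nat.card (Fˣ ⧸ Pd) = Nat.gcd (q - 1) d := by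
      have h2 : (q - 1) / Nat.gcd (q - 1) d * Nat.gcd (q - 1) d = q - 1 :=
        Nat.div_mul_cancel hgcd_dvd
      apply Nat.eq_of_mul_eq_mul_right hquotpos
      rw [← hlag, mul_comm, h2]
    rw [hfinal, Nat.gcd_comm]
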